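/- A monomial dynamical system f: F_q^n → F_q^n is a fixed point system if and only if both its Booleanization T(f): F_2^n → F_2^n and its associated linear system L(f) = A: (Z/(q-1))^n → (Z/(q-1))^n are fixed point systems. -/

import Mathlib

/-- The monomial dynamical system with exponent matrix `A`. -/
def monomialMap {K : Type*} [CommRing K] {n : ℕ} (A : Matrix (Fin n) (Fin n) ℕ)
    (x : Fin n → K) : Fin n → K := fun i => ∏ j, x j ^ A i j

/-- The exponent matrix of the Booleanization `T(f)`. -/
def boolMat {n : ℕ} (A : Matrix (Fin n) (Fin n) ℕ) : Matrix (Fin n) (Fin n) ℕ :=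
  fun i j => if 0 < A i j then 1 else 0

/-- A fixed point system: every periodic point is a fixed point. -/
def IsFixedPointSystem {X : Type*} (g : X → X) : Prop :=
  ∀ x, (∃ t, 0 < t ∧ g^[t] x = x) → g x = x

section Aux

open Function

/-- Iterated semiconjugacy. -/
lemma semiconj_iter {X Y : Type*} {f : X → X} {g : Y → Y} {h : X → Y}
    (H : ∀ x, g (h x) = h (f x)) : ∀ (k : ℕ) (x : X), g^[k] (h x) = h (f^[k] x) := by
  intro k
  induction k with
  | zero => intro x; simp
  | succ k ih =>
    intro x
    rw [Function.iterate_succ_apply', Function.iterate_succ_apply', ih, H]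

/-- In a finite fixed point system, every point reaches a fixed point
after `card X` steps. -/
lemma fps_stab {X : Type*} [Fintype X] {g : X → X} (h : IsFixedPointSystem g) (x : X) :
    g (g^[Fintype.card X] x) = g^[Fintype.card X] x := by
  set N := Fintype.card X with hN
  have key : ∀ a b : ℕ, a ≤ N → a < b → g^[a] x = g^[b] x →
      g (g^[N] x) = g^[N] x := by
    intro a b haN hab heq
    have hper : g^[b - a] (g^[a] x) = g^[a] x := by
      rw [← Function.iterate_add_apply, show b - a + a = b by omega]
      exact heq.symm
    have hfix : g (g^[a] x) = g^[a] x := h _ ⟨b - a, by omega, hper⟩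
    have hNx : g^[N] x = g^[a] x := by
      rw [show N = (N - a) + a by omega, Function.iterate_add_apply]
      exact Function.iterate_fixed hfix _
    rw [hNx, hfix]
  obtain ⟨i, j, hij, hfij⟩ := Fintype.exists_ne_map_eq_of_card_lt
    (fun i : Fin (N + 1) => g^[(i : ℕ)] x) (by simp [hN])
  have hvij : (i : ℕ) ≠ (j : ℕ) := fun hc => hij (Fin.ext hc)
  rcases lt_or_gt_of_ne hvij with hlt | hlt
  · exact key i j (by omega) hlt hfij
  · exact key j i (by omega) hlt hfij.symm

variable {G : Type*} [Group G] {g : G} {m : ℕ} [NeZero m]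

lemma exp_add (hg : orderOf g = m) (a b : ZMod m) :
    g ^ (a + b).val = g ^ a.val * g ^ b.val := by
  rw [← pow_add, pow_eq_pow_iff_modEq, hg, ZMod.val_add]
  exact Nat.mod_modEq _ m

lemma exp_natmul (hg : orderOf g = m) (k : ℕ) (a : ZMod m) :
    g ^ ((k : ZMod m) * a).val = (g ^ a.val) ^ k := by
  rw [← pow_mul, pow_eq_pow_iff_modEq, hg, ZMod.val_mul, ZMod.val_natCast,
    Nat.mul_comm a.val k]
  exact (Nat.mod_modEq _ m).trans ((Nat.mod_modEq k m).mul_right a.val)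

lemma exp_inj (hg : orderOf g = m) : Function.Injective fun a : ZMod m => g ^ a.val := by
  intro a b hab
  have h1 : a.val ≡ b.val [MOD m] := by
    have := (pow_eq_pow_iff_modEq).mp hab
    rwa [hg] at this
  have ha := ZMod.val_lt a
  have hb := ZMod.val_lt b
  have h2 : a.val = b.val := by
    simpa [Nat.ModEq, Nat.mod_eq_of_lt ha, Nat.mod_eq_of_lt hb] using h1
  exact ZMod.val_injective m h2

end Aux

section FieldAux

variable {F : Type*} [Field F] {m : ℕ} [NeZero m] {g : Fˣ}

lemma expF_add (hg : orderOf g = m) (a b : ZMod m) :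
    (g : F) ^ (a + b).val = (g : F) ^ a.val * (g : F) ^ b.val := by
  exact_mod_cast congrArg Units.val (exp_add hg a b)

lemma expF_natmul (hg : orderOf g = m) (k : ℕ) (a : ZMod m) :
    (g : F) ^ ((k : ZMod m) * a).val = ((g : F) ^ a.val) ^ k := by
  exact_mod_cast congrArg Units.val (exp_natmul hg k a)

lemma expF_inj (hg : orderOf g = m) :
    Function.Injective fun a : ZMod m => (g : F) ^ a.val := by
  intro a b hab
  refine exp_inj hg ?_
  show g ^ a.val = g ^ b.val
  exact Units.ext (by push_cast; exact hab)

lemma expF_sum (hg : orderOf g = m) {ι : Type*} (s : Finset ι) (c : ι → ZMod m) :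
    (g : F) ^ (∑ j ∈ s, c j).val = ∏ j ∈ s, (g : F) ^ (c j).val := by
  classical
  induction s using Finset.induction_on with
  | empty => simp
  | insert a s hx ih =>
    rw [Finset.sum_insert hx, Finset.prod_insert hx, expF_add hg, ih]

lemma expF_coord (hg : orderOf g = m) {n : ℕ} (A : Matrix (Fin n) (Fin n) ℕ)
    (v : Fin n → ZMod m) (i : Fin n) :
    ∏ j, ((g : F) ^ (v j).val) ^ A i j
      = (g : F) ^ (((A.map (Nat.cast : ℕ → ZMod m)).mulVec v) i).val := by
  have hmv : ((A.map (Nat.cast : ℕ → ZMod m)).mulVec v) i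
      = ∑ j, (A i j : ZMod m) * v j := by
    simp [Matrix.mulVec, dotProduct, Matrix.map_apply]
  rw [hmv, expF_sum hg]
  exact Finset.prod_congr rfl fun j _ => (expF_natmul hg (A i j) (v j)).symm

/-- The Boolean embedding `ZMod 2 →* F`. -/
noncomputable def iotaHom (F : Type*) [Field F] : ZMod 2 →* F where
  toFun b := if b = 0 then 0 else 1
  map_one' := by norm_num
  map_mul' x y := by
    have h2 : ∀ z : ZMod 2, z = 0 ∨ z = 1 := by decide
    rcases h2 x with h | h <;> subst h <;> simp

@[simp] lemma iotaHom_apply (b : ZMod 2) :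
    iotaHom F b = if b = 0 then 0 else 1 := rfl

lemma iotaHom_injective : Function.Injective (iotaHom F) := by
  intro a b hab
  have h2 : ∀ z : ZMod 2, z = 0 ∨ z = 1 := by decide
  rcases h2 a with ha | ha <;> rcases h2 b with hb | hb <;>
    subst ha <;> subst hb <;> simp_all

/-- The support map `F →* ZMod 2`. -/
noncomputable def zsign (F : Type*) [Field F] : F →* ZMod 2 := by
  classical
  exact
  { toFun := fun a => if a = 0 then 0 else 1
    map_one' := by simp
    map_mul' := fun x y => by
      by_cases hx : x = 0 <;> by_cases hy : y = 0 <;>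
        simp [hx, hy, mul_eq_zero] }

lemma zsign_apply [DecidableEq F] (a : F) : zsign F a = if a = 0 then 0 else 1 := by
  simp [zsign]

lemma zsign_eq_zero_iff (a : F) : zsign F a = 0 ↔ a = 0 := by
  classical
  rw [zsign_apply]
  by_cases h : a = 0 <;> simp [h]

lemma iota_pow (b : ZMod 2) {n : ℕ} (A : Matrix (Fin n) (Fin n) ℕ) (i j : Fin n) :
    iotaHom F (b ^ boolMat A i j) = (iotaHom F b) ^ A i j := by
  have h2 : ∀ z : ZMod 2, z = 0 ∨ z = 1 := by decide
  rcases h2 b with h | h <;> subst h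
  · rcases Nat.eq_zero_or_pos (A i j) with h0 | h0
    · simp [boolMat, h0]
    · simp [boolMat, h0, zero_pow (by omega : A i j ≠ 0)]
  · simp

lemma zsign_pow (a : F) {n : ℕ} (A : Matrix (Fin n) (Fin n) ℕ) (i j : Fin n) :
    zsign F (a ^ A i j) = (zsign F a) ^ boolMat A i j := by
  classical
  rcases Nat.eq_zero_or_pos (A i j) with h0 | h0
  · simp [boolMat, h0, zsign_apply]
  · by_cases ha : a = 0
    · simp [boolMat, h0, ha, zsign_apply, zero_pow (by omega : A i j ≠ 0)]
    · simp [boolMat, h0, ha, zsign_apply, pow_ne_zero _ ha]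

end FieldAux

theorem stmt5 {F : Type*} [Field F] [Fintype F] {n : ℕ}
    (A : Matrix (Fin n) (Fin n) ℕ) :
    IsFixedPointSystem (monomialMap (K := F) A) ↔
      IsFixedPointSystem (monomialMap (K := ZMod 2) (boolMat A)) ∧
      IsFixedPointSystem (fun s : Fin n → ZMod (Fintype.card F - 1) =>
        (A.map (Nat.cast : ℕ → ZMod (Fintype.card F - 1))).mulVec s) := by
  classical
  set m := Fintype.card F - 1 with hmdef
  have hm1 : 1 ≤ m := by
    have := Fintype.one_lt_card (α := F)
    omega
  haveI : NeZero m := ⟨by omega⟩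
  obtain ⟨g, hgen⟩ := IsCyclic.exists_generator (α := Fˣ)
  have hg : orderOf g = m := by
    rw [orderOf_eq_card_of_forall_mem_zpowers hgen, Nat.card_eq_fintype_card,
      Fintype.card_units]
  set f := monomialMap (K := F) A with hfdef
  set T := monomialMap (K := ZMod 2) (boolMat A) with hTdef
  set L := fun s : Fin n → ZMod m =>
    (A.map (Nat.cast : ℕ → ZMod m)).mulVec s with hLdef
  set expF : ZMod m → F := fun a => (g : F) ^ a.val with hexpFdef
  set Ψ : (Fin n → ZMod m) → (Fin n → F) := fun s j => expF (s j) with hΨdef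
  set Φ : (Fin n → ZMod 2) → (Fin n → F) := fun b j => iotaHom F (b j) with hΦdef
  set σmap : (Fin n → F) → (Fin n → ZMod 2) := fun x j => zsign F (x j) with hσdef
  -- semiconjugacies
  have hΨsc : ∀ v, f (Ψ v) = Ψ (L v) := by
    intro v
    funext i
    show ∏ j, expF (v j) ^ A i j = expF (L v i)
    exact expF_coord hg A v i
  have hΦsc : ∀ b, f (Φ b) = Φ (T b) := by
    intro b
    funext i
    show ∏ j, (iotaHom F (b j)) ^ A i j = iotaHom F (∏ j, b j ^ boolMat A i j)
    rw [map_prod]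
    exact Finset.prod_congr rfl fun j _ => (iota_pow (b j) A i j).symm
  have hσsc : ∀ x, T (σmap x) = σmap (f x) := by
    intro x
    funext i
    show ∏ j, (zsign F (x j)) ^ boolMat A i j = zsign F (∏ j, x j ^ A i j)
    rw [map_prod]
    exact Finset.prod_congr rfl fun j _ => (zsign_pow (x j) A i j).symm
  constructor
  · intro hf
    constructor
    · rintro b ⟨t, ht, hb⟩
      have hiter : f^[t] (Φ b) = Φ (T^[t] b) := semiconj_iter hΦsc t b
      rw [hb] at hiter
      have hfix : f (Φ b) = Φ b := hf _ ⟨t, ht, hiter⟩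
      rw [hΦsc b] at hfix
      funext i
      exact iotaHom_injective (congrFun hfix i)
    · rintro v ⟨t, ht, hv⟩
      have hiter : f^[t] (Ψ v) = Ψ (L^[t] v) := semiconj_iter hΨsc t v
      rw [hv] at hiter
      have hfix : f (Ψ v) = Ψ v := hf _ ⟨t, ht, hiter⟩
      rw [hΨsc v] at hfix
      funext i
      exact expF_inj hg (congrFun hfix i)
  · rintro ⟨hT', hL'⟩ x ⟨t, ht, hx⟩
    -- support is invariant
    have hTper : T^[t] (σmap x) = σmap x := by
      rw [semiconj_iter hσsc t x, hx]
    have hTfix : T (σmap x) = σmap x := hT' _ ⟨t, ht, hTper⟩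
    have hsupp : ∀ i, ((f x) i = 0 ↔ x i = 0) := by
      intro i
      have h1 : σmap (f x) = σmap x := by rw [← hσsc, hTfix]
      have h2 : zsign F ((f x) i) = zsign F (x i) := congrFun h1 i
      constructor <;> intro h0
      · rw [← zsign_eq_zero_iff, ← h2, zsign_eq_zero_iff]; exact h0
      · rw [← zsign_eq_zero_iff, h2, zsign_eq_zero_iff]; exact h0
    have hstar : ∀ i, x i ≠ 0 → ∀ j, 0 < A i j → x j ≠ 0 := by
      intro i hi j hij hj0
      have h1 : (f x) i ≠ 0 := fun h => hi ((hsupp i).mp h)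
      apply h1
      show ∏ l, x l ^ A i l = 0
      exact Finset.prod_eq_zero (Finset.mem_univ j)
        (by rw [hj0]; exact zero_pow (by omega))
    -- discrete logarithm
    have hsurj : ∀ a : F, a ≠ 0 → ∃ c : ZMod m, expF c = a := by
      intro a ha
      obtain ⟨k, hk⟩ := Submonoid.mem_powers_iff _ _ |>.mp
        ((mem_powers_iff_mem_zpowers).mpr (hgen (Units.mk0 a ha)))
      refine ⟨(k : ZMod m), ?_⟩
      have h1 : g ^ ((k : ZMod m)).val = g ^ k := by
        rw [pow_eq_pow_iff_modEq, hg, ZMod.val_natCast]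
        exact Nat.mod_modEq k m
      show (g : F) ^ ((k : ZMod m)).val = a
      calc (g : F) ^ ((k : ZMod m)).val = ((g ^ ((k : ZMod m)).val : Fˣ) : F) := by
            push_cast; ring
        _ = ((g ^ k : Fˣ) : F) := by rw [h1]
        _ = ((Units.mk0 a ha : Fˣ) : F) := by rw [hk]
        _ = a := rfl
    have hsc : ∀ j, ∃ c : ZMod m, x j ≠ 0 → expF c = x j := by
      intro j
      by_cases hj : x j = 0
      · exact ⟨0, fun h => absurd hj h⟩
      · obtain ⟨c, hc⟩ := hsurj (x j) hj
        exact ⟨c, fun _ => hc⟩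
    choose s hs using hsc
    -- claim: on the support, the dynamics is given by L
    have hC : ∀ k, ∀ i, x i ≠ 0 → (f^[k] x) i = expF ((L^[k] s) i) := by
      intro k
      induction k with
      | zero =>
        intro i hi
        simpa using (hs i hi).symm
      | succ k ih =>
        intro i hi
        rw [Function.iterate_succ_apply', Function.iterate_succ_apply']
        have hstep : ∏ j, (f^[k] x) j ^ A i j = ∏ j, expF ((L^[k] s) j) ^ A i j := by
          apply Finset.prod_congr rfl
          intro j _
          rcases Nat.eq_zero_or_pos (A i j) with h0 | hpos
          · rw [h0, pow_zero, pow_zero]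
          · rw [ih j (hstar i hi j hpos)]
        show ∏ j, (f^[k] x) j ^ A i j = expF (L (L^[k] s) i)
        rw [hstep]
        exact expF_coord hg A (L^[k] s) i
    -- stabilization of L
    set Nc := Fintype.card (Fin n → ZMod m) with hNc
    have hyfix : L (L^[Nc] s) = L^[Nc] s := fps_stab hL' s
    have hLk : ∀ k, Nc ≤ k → L^[k] s = L^[Nc] s := by
      intro k hk
      rw [show k = (k - Nc) + Nc by omega, Function.iterate_add_apply]
      exact Function.iterate_fixed hyfix _
    have hxk : ∀ N : ℕ, f^[t * N] x = x := by
      intro N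
      rw [Function.iterate_mul]
      exact Function.iterate_fixed hx N
    have hKge : Nc ≤ t * Nc := Nat.le_mul_of_pos_left Nc ht
    funext i
    by_cases hi : x i = 0
    · rw [(hsupp i).mpr hi, hi]
    · have h1 : x i = expF ((L^[Nc] s) i) := by
        conv_lhs => rw [← hxk Nc]
        rw [hC (t * Nc) i hi, hLk (t * Nc) hKge]
      have h2 : (f x) i = expF ((L^[Nc] s) i) := by
        have hfx : f x = f^[t * Nc + 1] x := by
          rw [Function.iterate_succ_apply', hxk Nc]
        rw [hfx, hC (t * Nc + 1) i hi, hLk (t * Nc + 1) (by omega)]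
      rw [h1, h2]
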